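/- Let G be a finite abelian group with |G| ≥ 2, f : G → ℝ a real-valued positive definite function, and v : Ĝ → ℝ a nonzero function with v(χ) ≥ 0 for all χ ∈ Ĝ. If μ := |supp(v)| < |G|, then ν₂(f) ≥ (|G|·R_f(v) − μ·f(1))/(|G| − μ). -/

import Mathlib

open Complex Finset

/-- The dual group `Ĝ = G →* ℂˣ` of a finite abelian group is finite. -/
noncomputable instance instFintypeDual (G : Type*) [CommGroup G] [Fintype G] :
    Fintype (G →* ℂˣ) := by
  have : NeZero (Monoid.exponent G) := ⟨Monoid.exponent_ne_zero_of_finite⟩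
  have : Finite (G →* ℂˣ) := by
    obtain ⟨e⟩ := CommGroup.monoidHom_mulEquiv_of_hasEnoughRootsOfUnity G ℂ
    exact Finite.of_equiv G e.symm.toEquiv
  exact Fintype.ofFinite _

/-- The Fourier transform of `f : G → ℂ`, as a function on the dual group `G →* ℂˣ`:
`f̂(χ) = (1/|G|) ∑_{x ∈ G} f(x) conj(χ(x))`. -/
noncomputable def fourierT {G : Type*} [CommGroup G] [Fintype G] (f : G → ℂ) :
    (G →* ℂˣ) → ℂ :=
  fun χ => (Fintype.card G : ℂ)⁻¹ * ∑ x : G, f x * (starRingEnd ℂ) ((χ x : ℂ))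

/-- Normalized inner product `⟨u,w⟩ = (1/|α|) ∑ u(χ) conj(w(χ))`. -/
noncomputable def inn {α : Type*} [Fintype α] (u w : α → ℂ) : ℂ :=
  (Fintype.card α : ℂ)⁻¹ * ∑ χ : α, u χ * (starRingEnd ℂ) (w χ)

/-- Normalized convolution `(u∗w)(χ) = (1/|α|) ∑_ρ u(χρ⁻¹) w(ρ)`. -/
noncomputable def convol {α : Type*} [Group α] [Fintype α] (u w : α → ℂ) : α → ℂ :=
  fun χ => (Fintype.card α : ℂ)⁻¹ * ∑ ρ : α, u (χ * ρ⁻¹) * w ρ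

/-- The Rayleigh quotient `R_f(v) = |G| ⟨f̂ ∗ v, v⟩ / ⟨v, v⟩`. -/
noncomputable def Rq {G : Type*} [CommGroup G] [Fintype G] (f : G → ℂ)
    (v : (G →* ℂˣ) → ℂ) : ℂ :=
  (Fintype.card G : ℂ) * inn (convol (fourierT f) v) v / inn v v

/-- `nu f k` is the `k`-th largest value (1-indexed, with multiplicity) of the
real-valued function `f` on a finite type. -/
noncomputable def nu {G : Type*} [Fintype G] (f : G → ℝ) (k : ℕ) : ℝ :=
  ((Finset.univ.val.map f).sort (· ≤ ·)).getD (Fintype.card G - k) 0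

/-- `f` is positive definite: every Fourier coefficient is a nonnegative real number. -/
def PosDef {G : Type*} [CommGroup G] [Fintype G] (f : G → ℂ) : Prop :=
  ∀ χ : G →* ℂˣ, (fourierT f χ).im = 0 ∧ 0 ≤ (fourierT f χ).re

section Aux

variable {G : Type*} [CommGroup G] [Fintype G]

lemma char_norm (χ : G →* ℂˣ) (x : G) : ‖(χ x : ℂ)‖ = 1 := by
  have h : ((χ x : ℂ)) ^ (Fintype.card G) = 1 := by
    rw [← Units.val_pow_eq_pow_val, ← map_pow, pow_card_eq_one, map_one, Units.val_one]
  exact Complex.norm_eq_one_of_pow_eq_one h Fintype.card_ne_zero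

lemma char_conj (χ : G →* ℂˣ) (x : G) : (starRingEnd ℂ) (χ x : ℂ) = (χ x⁻¹ : ℂ) := by
  rw [← RCLike.inv_eq_conj (char_norm χ x), map_inv, ← Units.val_inv_eq_inv_val]

lemma char_sum_eq_zero {χ : G →* ℂˣ} (hχ : χ ≠ 1) : ∑ x : G, (χ x : ℂ) = 0 := by
  obtain ⟨a, ha⟩ := DFunLike.ne_iff.mp hχ
  have key : (χ a : ℂ) * ∑ x : G, (χ x : ℂ) = ∑ x : G, (χ x : ℂ) := by
    rw [Finset.mul_sum]
    exact Fintype.sum_equiv (Equiv.mulLeft a) _ _ (fun x => by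
      simp [map_mul, Units.val_mul])
  have h0 : ((χ a : ℂ) - 1) * ∑ x : G, (χ x : ℂ) = 0 := by
    rw [mul_comm] at key; ring_nf; linear_combination key
  rcases mul_eq_zero.mp h0 with h | h
  · exact absurd (Units.ext (by simpa [sub_eq_zero] using h)) ha
  · exact h

lemma card_dual (G : Type*) [CommGroup G] [Fintype G] :
    Fintype.card (G →* ℂˣ) = Fintype.card G := by
  have : NeZero (Monoid.exponent G) := ⟨Monoid.exponent_ne_zero_of_finite⟩
  obtain ⟨e⟩ := CommGroup.monoidHom_mulEquiv_of_hasEnoughRootsOfUnity G ℂ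
  exact Fintype.card_congr e.toEquiv

lemma dual_sum_eq_zero {x : G} (hx : x ≠ 1) : ∑ χ : G →* ℂˣ, (χ x : ℂ) = 0 := by
  have : NeZero (Monoid.exponent G) := ⟨Monoid.exponent_ne_zero_of_finite⟩
  obtain ⟨ψ, hψ⟩ := CommGroup.exists_apply_ne_one_of_hasEnoughRootsOfUnity G ℂ hx
  have key : (ψ x : ℂ) * ∑ χ : G →* ℂˣ, (χ x : ℂ) = ∑ χ : G →* ℂˣ, (χ x : ℂ) := by
    rw [Finset.mul_sum]
    exact Fintype.sum_equiv (Equiv.mulLeft ψ) _ _ (fun χ => by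
      simp [MonoidHom.mul_apply, Units.val_mul])
  have h0 : ((ψ x : ℂ) - 1) * ∑ χ : G →* ℂˣ, (χ x : ℂ) = 0 := by
    rw [mul_comm] at key; ring_nf; linear_combination key
  rcases mul_eq_zero.mp h0 with h | h
  · exact absurd (Units.ext (by simpa [sub_eq_zero] using h)) hψ
  · exact h

lemma inversion (f : G → ℂ) (x : G) :
    ∑ χ : G →* ℂˣ, fourierT f χ * (χ x : ℂ) = f x := by
  classical
  have hN : (Fintype.card G : ℂ) ≠ 0 := Nat.cast_ne_zero.mpr Fintype.card_ne_zero
  have step : ∀ χ : G →* ℂˣ, fourierT f χ * (χ x : ℂ)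
      = (Fintype.card G : ℂ)⁻¹ * ∑ y : G, f y * (χ (x * y⁻¹) : ℂ) := by
    intro χ
    rw [fourierT, mul_assoc, Finset.sum_mul]
    congr 1
    refine Finset.sum_congr rfl fun y _ => ?_
    rw [char_conj, mul_assoc]
    congr 1
    rw [← Units.val_mul, ← map_mul, mul_comm]
  rw [Finset.sum_congr rfl (fun χ _ => step χ), ← Finset.mul_sum, Finset.sum_comm]
  have inner : ∀ y : G, ∑ χ : G →* ℂˣ, f y * (χ (x * y⁻¹) : ℂ)
      = if y = x then (Fintype.card G : ℂ) * f x else 0 := by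
    intro y
    rw [← Finset.mul_sum]
    by_cases hy : y = x
    · subst hy
      simp [card_dual, mul_comm]
    · rw [dual_sum_eq_zero fun h => hy (mul_inv_eq_one.mp h).symm, mul_zero]
      simp [hy]
  rw [Finset.sum_congr rfl fun y _ => inner y]
  simp [hN]

lemma posdef_max (f : G → ℝ) (hf : PosDef fun x => (f x : ℂ)) (x : G) : f x ≤ f 1 := by
  have key : ∀ z : G, f z
      = ∑ χ : G →* ℂˣ, (fourierT (fun y => (f y : ℂ)) χ).re * ((χ z : ℂ)).re := by
    intro z
    have h := congrArg Complex.re (inversion (fun y => (f y : ℂ)) z)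
    simp only [Complex.ofReal_re] at h
    rw [← h, Complex.re_sum]
    refine Finset.sum_congr rfl fun χ _ => ?_
    rw [Complex.mul_re, (hf χ).1, zero_mul, sub_zero]
  rw [key x, key 1]
  refine Finset.sum_le_sum fun χ _ => ?_
  have h1 : ((χ 1 : ℂ)).re = 1 := by simp
  rw [h1, mul_one]
  refine mul_le_of_le_one_right (hf χ).2 ?_
  calc ((χ x : ℂ)).re ≤ ‖(χ x : ℂ)‖ := Complex.re_le_norm _
  _ = 1 := char_norm χ x

lemma conj_char_mul (χ ρ : G →* ℂˣ) (x : G) :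
    (starRingEnd ℂ) (((χ * ρ⁻¹) x : ℂ)) = (starRingEnd ℂ) (χ x : ℂ) * (ρ x : ℂ) := by
  have h : ((χ * ρ⁻¹) x : ℂ) = (χ x : ℂ) * ((ρ x : ℂ))⁻¹ := by
    simp [Units.val_mul, Units.val_inv_eq_inv_val]
  rw [h, map_mul, map_inv₀, ← RCLike.inv_eq_conj (char_norm ρ x), inv_inv]

lemma char_orth (χ ρ : G →* ℂˣ) :
    ∑ x : G, (starRingEnd ℂ) (χ x : ℂ) * (ρ x : ℂ)
      = if χ = ρ then (Fintype.card G : ℂ) else 0 := by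
  classical
  have hterm : ∀ x : G, (starRingEnd ℂ) (χ x : ℂ) * (ρ x : ℂ) = (((ρ * χ⁻¹) x : ℂ)) := by
    intro x
    rw [char_conj]
    simp [Units.val_mul, ← map_inv, mul_comm]
  rw [Finset.sum_congr rfl fun x _ => hterm x]
  by_cases h : χ = ρ
  · subst h
    simp [card_univ]
  · rw [char_sum_eq_zero (fun hc => h (mul_inv_eq_one.mp hc).symm)]
    simp [h]

end Aux

section NuAux

lemma sorted_getD_ge {L : List ℝ} (hL : L.Pairwise (· ≤ ·)) {a : ℝ} {k : ℕ} (hk : k < L.length)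
    (hk2 : L.length ≤ k + 2) (hc : 2 ≤ L.countP (fun t => decide (a ≤ t))) :
    a ≤ L.getD k 0 := by
  by_contra hka
  push_neg at hka
  rw [List.getD_eq_getElem L 0 hk] at hka
  set p : ℝ → Bool := fun t => decide (a ≤ t) with hp
  have hdrop : L.drop k = L[k] :: L.drop (k + 1) := List.drop_eq_getElem_cons hk
  have htake : (L.take k).countP p = 0 := by
    rw [List.countP_eq_zero]
    intro b hb
    have hmem : L[k] ∈ L.drop k := by rw [hdrop]; exact List.mem_cons_self
    have hble : b ≤ L[k] := hL.rel_of_mem_take_of_mem_drop hb hmem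
    simp [hp, not_le.mpr (lt_of_le_of_lt hble hka)]
  have h2 : L.countP p = (L.take k).countP p + (L.drop k).countP p := by
    rw [← List.countP_append, List.take_append_drop]
  have h3 : (L.drop k).countP p ≤ 1 := by
    rw [hdrop, List.countP_cons]
    have hkf : p L[k] = false := by simp [hp, not_le.mpr hka]
    rw [hkf]
    simp only [Bool.false_eq_true, if_false, add_zero]
    calc (L.drop (k + 1)).countP p ≤ (L.drop (k + 1)).length := List.countP_le_length
    _ = L.length - (k + 1) := List.length_drop
    _ ≤ 1 := by omega
  omega

variable {G : Type*} [Fintype G]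

lemma len_sort (f : G → ℝ) :
    ((Finset.univ.val.map f).sort (· ≤ ·)).length = Fintype.card G := by
  rw [Multiset.length_sort, Multiset.card_map]; rfl

lemma nu_two_ge [One G] (f : G → ℝ) (hG : 2 ≤ Fintype.card G) (hmax : ∀ y, f y ≤ f 1)
    {x : G} (hx : x ≠ 1) : f x ≤ nu f 2 := by
  classical
  have hlen := len_sort f
  refine sorted_getD_ge (Multiset.pairwise_sort _ _) (by omega) (by omega) ?_
  have hcount : ((Finset.univ.val.map f).sort (· ≤ ·)).countP (fun t => decide (f x ≤ t))
      = Multiset.countP (fun t => f x ≤ t) (Finset.univ.val.map f) := by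
    conv_rhs => rw [← Multiset.sort_eq (Finset.univ.val.map f) (· ≤ ·)]
    rw [Multiset.coe_countP]
  rw [hcount, Multiset.countP_map]
  have hsub : ({1, x} : Finset G) ⊆ Finset.univ.filter (fun y => f x ≤ f y) := by
    intro y hy
    rcases Finset.mem_insert.mp hy with h | h
    · subst h; exact Finset.mem_filter.mpr ⟨Finset.mem_univ _, hmax x⟩
    · rw [Finset.mem_singleton.mp h]; exact Finset.mem_filter.mpr ⟨Finset.mem_univ _, le_refl _⟩
  calc (2 : ℕ) = ({1, x} : Finset G).card := (Finset.card_pair (Ne.symm hx)).symm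
  _ ≤ (Finset.univ.filter (fun y => f x ≤ f y)).card := Finset.card_le_card hsub
  _ = Multiset.card (Multiset.filter (fun y => f x ≤ f y) Finset.univ.val) := rfl

lemma nu_two_le [One G] (f : G → ℝ) (hG : 2 ≤ Fintype.card G) (hmax : ∀ y, f y ≤ f 1) :
    nu f 2 ≤ f 1 := by
  have hlen := len_sort f
  have hmem : nu f 2 ∈ ((Finset.univ.val.map f).sort (· ≤ ·)) := by
    rw [nu, List.getD_eq_getElem _ _ (by omega)]
    exact List.getElem_mem _
  have hmem2 : nu f 2 ∈ Finset.univ.val.map f := by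
    rw [← Multiset.sort_eq (Finset.univ.val.map f) (· ≤ ·)]
    exact Multiset.mem_coe.mpr hmem
  obtain ⟨y, _, hy⟩ := Multiset.mem_map.mp hmem2
  rw [← hy]; exact hmax y

end NuAux

section Core

variable {G : Type*} [CommGroup G] [Fintype G]

/-- The inverse Fourier transform of `v`. -/
noncomputable def wfun (v : (G →* ℂˣ) → ℝ) : G → ℂ :=
  fun x => ∑ χ : G →* ℂˣ, (v χ : ℂ) * (χ x : ℂ)

lemma conj_wfun (v : (G →* ℂˣ) → ℝ) (x : G) :
    (starRingEnd ℂ) (wfun v x) = ∑ χ : G →* ℂˣ, (v χ : ℂ) * (starRingEnd ℂ) (χ x : ℂ) := by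
  rw [wfun, map_sum]
  exact Finset.sum_congr rfl fun χ _ => by rw [map_mul, Complex.conj_ofReal]

lemma sum_normSq_wfun (v : (G →* ℂˣ) → ℝ) :
    ∑ x : G, (starRingEnd ℂ) (wfun v x) * wfun v x
      = (Fintype.card G : ℂ) * ∑ χ : G →* ℂˣ, ((v χ : ℂ)) ^ 2 := by
  classical
  have expand : ∀ x : G, (starRingEnd ℂ) (wfun v x) * wfun v x
      = ∑ χ : G →* ℂˣ, ∑ ρ : G →* ℂˣ,
          ((v χ : ℂ) * (v ρ : ℂ)) * ((starRingEnd ℂ) (χ x : ℂ) * (ρ x : ℂ)) := by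
    intro x
    rw [conj_wfun, wfun, Finset.sum_mul_sum]
    exact Finset.sum_congr rfl fun χ _ => Finset.sum_congr rfl fun ρ _ => by ring
  rw [Finset.sum_congr rfl fun x _ => expand x, Finset.sum_comm]
  rw [Finset.sum_congr rfl fun χ _ => Finset.sum_comm]
  have inner : ∀ χ ρ : G →* ℂˣ, ∑ x : G,
      ((v χ : ℂ) * (v ρ : ℂ)) * ((starRingEnd ℂ) (χ x : ℂ) * (ρ x : ℂ))
      = if χ = ρ then ((v χ : ℂ) * (v ρ : ℂ)) * (Fintype.card G : ℂ) else 0 := by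
    intro χ ρ
    rw [← Finset.mul_sum, char_orth]
    by_cases h : χ = ρ <;> simp [h]
  rw [Finset.sum_congr rfl fun χ _ => Finset.sum_congr rfl fun ρ _ => inner χ ρ]
  rw [Finset.mul_sum]
  refine Finset.sum_congr rfl fun χ _ => ?_
  rw [Finset.sum_ite_eq Finset.univ χ fun ρ => ((v χ : ℂ) * (v ρ : ℂ)) * (Fintype.card G : ℂ)]
  simp only [Finset.mem_univ, if_true]
  ring

lemma double_sum_eq (f : G → ℝ) (v : (G →* ℂˣ) → ℝ) :
    ∑ χ : G →* ℂˣ, ∑ ρ : G →* ℂˣ,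
        fourierT (fun x => (f x : ℂ)) (χ * ρ⁻¹) * (v ρ : ℂ) * (v χ : ℂ)
      = (Fintype.card G : ℂ)⁻¹
        * ∑ x : G, (f x : ℂ) * ((starRingEnd ℂ) (wfun v x) * wfun v x) := by
  classical
  have expand : ∀ χ ρ : G →* ℂˣ,
      fourierT (fun x => (f x : ℂ)) (χ * ρ⁻¹) * (v ρ : ℂ) * (v χ : ℂ)
      = (Fintype.card G : ℂ)⁻¹ * ∑ x : G,
          (f x : ℂ) * (((v χ : ℂ) * (starRingEnd ℂ) (χ x : ℂ)) * ((v ρ : ℂ) * (ρ x : ℂ))) := by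
    intro χ ρ
    rw [fourierT, mul_assoc, mul_assoc, Finset.sum_mul]
    congr 1
    refine Finset.sum_congr rfl fun x _ => ?_
    rw [conj_char_mul]
    ring
  rw [Finset.sum_congr rfl fun χ _ => Finset.sum_congr rfl fun ρ _ => expand χ ρ]
  simp only [← Finset.mul_sum]
  congr 1
  have swap : (∑ χ : G →* ℂˣ, ∑ ρ : G →* ℂˣ, ∑ x : G,
      (f x : ℂ) * (((v χ : ℂ) * (starRingEnd ℂ) (χ x : ℂ)) * ((v ρ : ℂ) * (ρ x : ℂ))))
      = ∑ x : G, ∑ χ : G →* ℂˣ, ∑ ρ : G →* ℂˣ,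
      (f x : ℂ) * (((v χ : ℂ) * (starRingEnd ℂ) (χ x : ℂ)) * ((v ρ : ℂ) * (ρ x : ℂ))) := by
    calc (∑ χ : G →* ℂˣ, ∑ ρ : G →* ℂˣ, ∑ x : G,
        (f x : ℂ) * (((v χ : ℂ) * (starRingEnd ℂ) (χ x : ℂ)) * ((v ρ : ℂ) * (ρ x : ℂ))))
        = ∑ χ : G →* ℂˣ, ∑ x : G, ∑ ρ : G →* ℂˣ,
          (f x : ℂ) * (((v χ : ℂ) * (starRingEnd ℂ) (χ x : ℂ)) * ((v ρ : ℂ) * (ρ x : ℂ))) :=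
        Finset.sum_congr rfl fun χ _ => Finset.sum_comm
    _ = ∑ x : G, ∑ χ : G →* ℂˣ, ∑ ρ : G →* ℂˣ,
          (f x : ℂ) * (((v χ : ℂ) * (starRingEnd ℂ) (χ x : ℂ)) * ((v ρ : ℂ) * (ρ x : ℂ))) :=
        Finset.sum_comm
  rw [swap]
  refine Finset.sum_congr rfl fun x _ => ?_
  rw [conj_wfun, wfun, Finset.sum_mul_sum, Finset.mul_sum]
  refine Finset.sum_congr rfl fun χ _ => ?_
  rw [Finset.mul_sum]

end Core

/-- lower bound of `ν₂(f)` in terms of the Rayleigh quotient of a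
nonnegative nonzero `v` with `μ = |supp(v)| < |G|`. -/
theorem stmt_3 (G : Type*) [CommGroup G] [Fintype G] (hG : 2 ≤ Fintype.card G)
    (f : G → ℝ) (hf : PosDef (fun x => (f x : ℂ)))
    (v : (G →* ℂˣ) → ℝ) (hv : v ≠ 0) (hvpos : ∀ χ, 0 ≤ v χ)
    (μ : ℕ) (hμ : μ = (Function.support v).ncard) (hμlt : μ < Fintype.card G) :
    nu f 2 ≥
      ((Fintype.card G : ℝ) * (Rq (fun x => (f x : ℂ)) (fun χ => (v χ : ℂ))).re -
        μ * f 1) / ((Fintype.card G : ℝ) - μ) := by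
  classical
  have hNne : (Fintype.card G : ℝ) ≠ 0 := Nat.cast_ne_zero.mpr Fintype.card_ne_zero
  have hmax : ∀ y, f y ≤ f 1 := posdef_max f hf
  set S : ℝ := ∑ χ : G →* ℂˣ, (v χ) ^ 2 with hSdef
  set T : ℝ := ∑ x : G, f x * Complex.normSq (wfun v x) with hTdef
  -- S > 0
  have hS0 : 0 < S := by
    obtain ⟨χ0, hχ0⟩ := Function.ne_iff.mp hv
    have h1 : (v χ0) ^ 2 ≤ S :=
      Finset.single_le_sum (fun χ _ => sq_nonneg (v χ)) (Finset.mem_univ χ0)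
    have h2 : 0 < (v χ0) ^ 2 := (sq_nonneg _).lt_of_ne (Ne.symm (pow_ne_zero 2 hχ0))
    linarith
  -- sum of normSq
  have hsumr : ∑ x : G, Complex.normSq (wfun v x) = (Fintype.card G : ℝ) * S := by
    have h2 : ∀ x : G, ((Complex.normSq (wfun v x) : ℝ) : ℂ)
        = (starRingEnd ℂ) (wfun v x) * wfun v x := fun x => by
      rw [mul_comm, Complex.mul_conj]
    have hcast : ((∑ x : G, Complex.normSq (wfun v x) : ℝ) : ℂ)
        = (((Fintype.card G : ℝ) * S : ℝ) : ℂ) := by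
      calc ((∑ x : G, Complex.normSq (wfun v x) : ℝ) : ℂ)
          = ∑ x : G, ((Complex.normSq (wfun v x) : ℝ) : ℂ) := by push_cast; rfl
      _ = ∑ x : G, (starRingEnd ℂ) (wfun v x) * wfun v x :=
          Finset.sum_congr rfl fun x _ => h2 x
      _ = (Fintype.card G : ℂ) * ∑ χ : G →* ℂˣ, ((v χ : ℂ)) ^ 2 := sum_normSq_wfun v
      _ = (((Fintype.card G : ℝ) * S : ℝ) : ℂ) := by rw [hSdef]; push_cast; rfl
    exact_mod_cast hcast
  -- Rq real part
  have hinnvv : inn (fun χ => (v χ : ℂ)) (fun χ => (v χ : ℂ))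
      = (Fintype.card (G →* ℂˣ) : ℂ)⁻¹ * (S : ℂ) := by
    rw [inn, hSdef]
    push_cast
    congr 1
    refine Finset.sum_congr rfl fun χ _ => ?_
    rw [Complex.conj_ofReal]
    ring
  have hinn1 : inn (convol (fourierT fun x => (f x : ℂ)) fun χ => (v χ : ℂ)) (fun χ => (v χ : ℂ))
      = ((Fintype.card (G →* ℂˣ) : ℂ)⁻¹) ^ 2 *
        ∑ χ : G →* ℂˣ, ∑ ρ : G →* ℂˣ,
          fourierT (fun x => (f x : ℂ)) (χ * ρ⁻¹) * (v ρ : ℂ) * (v χ : ℂ) := by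
    rw [inn]
    have hterm : ∀ χ : G →* ℂˣ,
        convol (fourierT fun x => (f x : ℂ)) (fun χ => (v χ : ℂ)) χ * (starRingEnd ℂ) ((v χ : ℂ))
        = (Fintype.card (G →* ℂˣ) : ℂ)⁻¹ *
          ∑ ρ : G →* ℂˣ, fourierT (fun x => (f x : ℂ)) (χ * ρ⁻¹) * (v ρ : ℂ) * (v χ : ℂ) := by
      intro χ
      rw [convol, Complex.conj_ofReal, mul_assoc, Finset.sum_mul]
    rw [Finset.sum_congr rfl fun χ _ => hterm χ, ← Finset.mul_sum]
    ring
  have hT : ∑ x : G, (f x : ℂ) * ((starRingEnd ℂ) (wfun v x) * wfun v x) = (T : ℂ) := by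
    rw [hTdef]
    push_cast
    refine Finset.sum_congr rfl fun x _ => ?_
    rw [mul_comm ((starRingEnd ℂ) (wfun v x)) (wfun v x), Complex.mul_conj]
  have hRe : (Rq (fun x => (f x : ℂ)) (fun χ => (v χ : ℂ))).re
      = T / ((Fintype.card G : ℝ) * S) := by
    have hcards : (Fintype.card (G →* ℂˣ) : ℂ) = (Fintype.card G : ℂ) := by
      exact_mod_cast card_dual G
    have hNC : (Fintype.card G : ℂ) ≠ 0 := Nat.cast_ne_zero.mpr Fintype.card_ne_zero
    have hSC : (S : ℂ) ≠ 0 := by exact_mod_cast ne_of_gt hS0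
    have : Rq (fun x => (f x : ℂ)) (fun χ => (v χ : ℂ))
        = ((T / ((Fintype.card G : ℝ) * S) : ℝ) : ℂ) := by
      rw [Rq, hinn1, hinnvv, double_sum_eq, hT, hcards]
      push_cast
      field_simp
    rw [this, Complex.ofReal_re]
  -- Cauchy-Schwarz bound
  have hr1 : Complex.normSq (wfun v 1) ≤ (μ : ℝ) * S := by
    have hw1 : wfun v 1 = ((∑ χ : G →* ℂˣ, v χ : ℝ) : ℂ) := by
      rw [wfun]
      push_cast
      exact Finset.sum_congr rfl fun χ _ => by simp
    rw [hw1, Complex.normSq_ofReal]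
    have hsupp : (Function.support v).toFinset = Finset.univ.filter (fun χ => v χ ≠ 0) := by
      ext χ; simp [Function.mem_support]
    have hμ' : μ = (Finset.univ.filter (fun χ => v χ ≠ 0)).card := by
      rw [hμ, Set.ncard_eq_toFinset_card', hsupp]
    have hsum_eq : ∑ χ : G →* ℂˣ, v χ = ∑ χ ∈ Finset.univ.filter (fun χ => v χ ≠ 0), v χ :=
      (Finset.sum_filter_ne_zero _).symm
    have hcs : (∑ χ ∈ Finset.univ.filter (fun χ => v χ ≠ 0), v χ) ^ 2
        ≤ (Finset.univ.filter (fun χ => v χ ≠ 0)).card *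
          ∑ χ ∈ Finset.univ.filter (fun χ => v χ ≠ 0), (v χ) ^ 2 :=
      sq_sum_le_card_mul_sum_sq
    have hle : ∑ χ ∈ Finset.univ.filter (fun χ => v χ ≠ 0), (v χ) ^ 2 ≤ S :=
      Finset.sum_le_sum_of_subset_of_nonneg (Finset.filter_subset _ _)
        (fun χ _ _ => sq_nonneg _)
    calc (∑ χ : G →* ℂˣ, v χ) * (∑ χ : G →* ℂˣ, v χ)
        = (∑ χ ∈ Finset.univ.filter (fun χ => v χ ≠ 0), v χ) ^ 2 := by rw [hsum_eq, sq]
    _ ≤ (Finset.univ.filter (fun χ => v χ ≠ 0)).card *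
          ∑ χ ∈ Finset.univ.filter (fun χ => v χ ≠ 0), (v χ) ^ 2 := hcs
    _ ≤ (μ : ℝ) * S := by
        rw [hμ']
        exact mul_le_mul_of_nonneg_left hle (Nat.cast_nonneg _)
  -- nu bounds
  have hnu1 : nu f 2 ≤ f 1 := nu_two_le f hG hmax
  have hnu2 : ∀ x : G, x ≠ 1 → f x ≤ nu f 2 := fun x hx => nu_two_ge f hG hmax hx
  -- splitting T
  have hsplit : f 1 * Complex.normSq (wfun v 1)
      + ∑ x ∈ Finset.univ.erase 1, f x * Complex.normSq (wfun v x) = T :=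
    Finset.add_sum_erase Finset.univ (fun x : G => f x * Complex.normSq (wfun v x))
      (Finset.mem_univ (1 : G))
  have hsplit2 : Complex.normSq (wfun v 1)
      + ∑ x ∈ Finset.univ.erase 1, Complex.normSq (wfun v x)
      = (Fintype.card G : ℝ) * S := by
    rw [← hsumr]
    exact Finset.add_sum_erase Finset.univ (fun x : G => Complex.normSq (wfun v x))
      (Finset.mem_univ (1 : G))
  have hbound : ∑ x ∈ Finset.univ.erase 1, f x * Complex.normSq (wfun v x)
      ≤ nu f 2 * ∑ x ∈ Finset.univ.erase 1, Complex.normSq (wfun v x) := by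
    rw [Finset.mul_sum]
    refine Finset.sum_le_sum fun x hx => ?_
    exact mul_le_mul_of_nonneg_right (hnu2 x (Finset.ne_of_mem_erase hx)) (Complex.normSq_nonneg _)
  -- final arithmetic
  have hμR : (μ : ℝ) < (Fintype.card G : ℝ) := by exact_mod_cast hμlt
  rw [ge_iff_le, div_le_iff₀ (by linarith), hRe]
  have hNT : (Fintype.card G : ℝ) * (T / ((Fintype.card G : ℝ) * S)) = T / S := by
    field_simp
  rw [hNT, sub_le_iff_le_add, div_le_iff₀ hS0]
  have hprod : Complex.normSq (wfun v 1) * (f 1 - nu f 2) ≤ (μ : ℝ) * S * (f 1 - nu f 2) :=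
    mul_le_mul_of_nonneg_right hr1 (by linarith)
  have hE' : ∑ x ∈ Finset.univ.erase 1, Complex.normSq (wfun v x)
      = (Fintype.card G : ℝ) * S - Complex.normSq (wfun v 1) := by linarith
  rw [hE'] at hbound
  nlinarith [hprod, hsplit, hbound]
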